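/- Let X be a complete metric space such that for some D > 0 and C ≥ 1: every L-Lipschitz loop γ : S¹ → X with L < D admits a C·L-Lipschitz extension f : D² → X with f|_{S¹} = γ. Suppose also any two points of X at distance less than D are joined by a geodesic. Then every continuous loop γ : S¹ → X which is Lipschitz and null-homotopic admits a Lipschitz extension f : D² → X with f|_{S¹} = γ; in particular Span(γ) := inf{Lip(f) : f : D² → X Lipschitz, f|_{S¹} = γ} is finite. -/

import Mathlib

open Metric

noncomputable section

/-- the complex absolute value, as a bundled absolute value (compatibility shim) -/
def Complex.abs : AbsoluteValue ℂ ℝ where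
  toFun z := ‖z‖
  map_mul' := norm_mul
  nonneg' := norm_nonneg
  eq_zero' _ := norm_eq_zero
  add_le' := norm_add_le

@[simp] lemma Complex.abs_apply (z : ℂ) : Complex.abs z = ‖z‖ := rfl

lemma Complex.abs_ofReal (r : ℝ) : Complex.abs (r : ℂ) = |r| := by
  simp [Complex.abs_apply]

lemma Complex.abs_I : Complex.abs Complex.I = 1 := by simp [Complex.abs_apply]

lemma Complex.abs_re_le_abs (z : ℂ) : |z.re| ≤ Complex.abs z := Complex.abs_re_le_norm z

lemma Complex.abs_im_le_abs (z : ℂ) : |z.im| ≤ Complex.abs z := Complex.abs_im_le_norm z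

lemma Complex.abs_le_abs_re_add_abs_im (z : ℂ) : Complex.abs z ≤ |z.re| + |z.im| :=
  Complex.norm_le_abs_re_add_abs_im z

namespace LFS


/-- sup norm on ℂ -/
def nn (z : ℂ) : ℝ := max |z.re| |z.im|

lemma nn_nonneg (z : ℂ) : 0 ≤ nn z := le_trans (abs_nonneg _) (le_max_left _ _)

lemma nn_zero : nn 0 = 0 := by simp [nn]

lemma nn_eq_max (z : ℂ) : nn z = max |z.re| |z.im| := rfl

lemma abs_re_le_nn (z : ℂ) : |z.re| ≤ nn z := le_max_left _ _

lemma abs_im_le_nn (z : ℂ) : |z.im| ≤ nn z := le_max_right _ _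

lemma nn_le_abs (z : ℂ) : nn z ≤ Complex.abs z :=
  max_le (Complex.abs_re_le_abs z) (Complex.abs_im_le_abs z)

lemma abs_le_two_nn (z : ℂ) : Complex.abs z ≤ 2 * nn z := by
  calc Complex.abs z ≤ |z.re| + |z.im| := Complex.abs_le_abs_re_add_abs_im z
    _ ≤ nn z + nn z := add_le_add (le_max_left _ _) (le_max_right _ _)
    _ = 2 * nn z := by ring

lemma nn_add_le (z w : ℂ) : nn (z + w) ≤ nn z + nn w := by
  refine max_le ?_ ?_
  · calc |(z+w).re| = |z.re + w.re| := by simp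
      _ ≤ |z.re| + |w.re| := abs_add_le _ _
      _ ≤ nn z + nn w := add_le_add (le_max_left _ _) (le_max_left _ _)
  · calc |(z+w).im| = |z.im + w.im| := by simp
      _ ≤ |z.im| + |w.im| := abs_add_le _ _
      _ ≤ nn z + nn w := add_le_add (le_max_right _ _) (le_max_right _ _)

lemma nn_lip (z w : ℂ) : |nn z - nn w| ≤ Complex.abs (z - w) := by
  have h1 : nn z ≤ nn w + nn (z - w) := by
    have := nn_add_le (z - w) w; simpa [add_comm] using this
  have h2 : nn w ≤ nn z + nn (z - w) := by
    have := nn_add_le (w - z) z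
    have e : nn (w - z) = nn (z - w) := by
      unfold nn; simp [abs_sub_comm]
    rw [e] at this; simpa [add_comm] using this
  have := nn_le_abs (z - w)
  rw [abs_sub_le_iff]; constructor <;> linarith

lemma nn_pos {z : ℂ} (hz : z ≠ 0) : 0 < nn z := by
  rcases lt_or_eq_of_le (nn_nonneg z) with h | h
  · exact h
  · exfalso; apply hz
    have h1 : |z.re| ≤ 0 := h ▸ le_max_left _ _
    have h2 : |z.im| ≤ 0 := h ▸ le_max_right _ _
    have : z.re = 0 := abs_nonpos_iff.mp h1
    have : z.im = 0 := abs_nonpos_iff.mp h2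
    exact Complex.ext ‹z.re = 0› this

lemma nn_real_mul (r : ℝ) (z : ℂ) : nn ((r:ℂ) * z) = |r| * nn z := by
  unfold nn
  simp [Complex.mul_re, Complex.mul_im, abs_mul, mul_max_of_nonneg _ _ (abs_nonneg r)]

/-- disk → square map -/
def sqmap (z : ℂ) : ℂ := ((Complex.abs z / nn z : ℝ) : ℂ) * z
/-- square → disk map -/
def dmap (z : ℂ) : ℂ := ((nn z / Complex.abs z : ℝ) : ℂ) * z

lemma nn_sqmap (z : ℂ) : nn (sqmap z) = Complex.abs z := by
  by_cases hz : z = 0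
  · simp [hz, sqmap, nn_zero]
  · rw [sqmap, nn_real_mul, abs_of_nonneg (div_nonneg (Complex.abs.nonneg z) (nn_nonneg z)),
      div_mul_cancel₀]
    exact (nn_pos hz).ne'

lemma abs_dmap (z : ℂ) : Complex.abs (dmap z) = nn z := by
  by_cases hz : z = 0
  · simp [hz, dmap, nn_zero]
  · rw [dmap, map_mul, Complex.abs_ofReal,
      abs_of_nonneg (div_nonneg (nn_nonneg z) (Complex.abs.nonneg z)), div_mul_cancel₀]
    exact (Complex.abs.pos hz).ne'

lemma dmap_sqmap (z : ℂ) : dmap (sqmap z) = z := by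
  by_cases hz : z = 0
  · simp [hz, sqmap, dmap]
  · have h1 : nn z ≠ 0 := (nn_pos hz).ne'
    have h2 : Complex.abs z ≠ 0 := (Complex.abs.pos hz).ne'
    rw [dmap, nn_sqmap, sqmap, map_mul, Complex.abs_ofReal,
      abs_of_nonneg (div_nonneg (Complex.abs.nonneg z) (nn_nonneg z))]
    rw [show Complex.abs z / (Complex.abs z / nn z * Complex.abs z)
        = nn z / Complex.abs z by field_simp]
    rw [← mul_assoc, ← Complex.ofReal_mul]
    rw [show nn z / Complex.abs z * (Complex.abs z / nn z) = 1 by field_simp]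
    simp

lemma sqmap_dmap (z : ℂ) : sqmap (dmap z) = z := by
  by_cases hz : z = 0
  · simp [hz, sqmap, dmap]
  · have h1 : nn z ≠ 0 := (nn_pos hz).ne'
    have h2 : Complex.abs z ≠ 0 := (Complex.abs.pos hz).ne'
    rw [sqmap, abs_dmap, dmap, nn_real_mul,
      abs_of_nonneg (div_nonneg (nn_nonneg z) (Complex.abs.nonneg z))]
    rw [show nn z / (nn z / Complex.abs z * nn z) = Complex.abs z / nn z by field_simp]
    rw [← mul_assoc, ← Complex.ofReal_mul]
    rw [show Complex.abs z / nn z * (nn z / Complex.abs z) = 1 by field_simp]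
    simp



lemma Tlip (u v : ℂ → ℝ) (hu0 : ∀ z, 0 ≤ u z) (hv0 : ∀ z, z ≠ 0 → 0 < v z)
    (huv : ∀ z, u z ≤ 2 * v z) (hnv : ∀ z, Complex.abs z ≤ 2 * v z)
    (hul : ∀ z w, |u z - u w| ≤ Complex.abs (z - w))
    (hvl : ∀ z w, |v z - v w| ≤ Complex.abs (z - w)) (z w : ℂ) :
    Complex.abs (((u z / v z : ℝ) : ℂ) * z - ((u w / v w : ℝ) : ℂ) * w)
      ≤ 14 * Complex.abs (z - w) := by
  have key : ∀ y : ℂ, Complex.abs (((u y / v y : ℝ) : ℂ) * y) ≤ 2 * Complex.abs y := by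
    intro y
    by_cases hy : y = 0
    · simp [hy]
    · rw [map_mul, Complex.abs_ofReal,
        abs_of_nonneg (div_nonneg (hu0 y) (hv0 y hy).le)]
      have : u y / v y ≤ 2 := (div_le_iff₀ (hv0 y hy)).mpr (huv y)
      nlinarith [Complex.abs.nonneg y]
  have asub : ∀ a b : ℂ, Complex.abs (a - b) ≤ Complex.abs a + Complex.abs b := by
    intro a b
    rw [sub_eq_add_neg]
    exact le_trans (Complex.abs.add_le _ _) (by rw [Complex.abs.map_neg])
  by_cases hz : z = 0
  · subst hz
    rw [show ((u 0 / v 0 : ℝ) : ℂ) * 0 - ((u w / v w : ℝ) : ℂ) * w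
        = -(((u w / v w : ℝ) : ℂ) * w) by ring, Complex.abs.map_neg,
      show (0:ℂ) - w = -w by ring, Complex.abs.map_neg]
    exact le_trans (key w) (by linarith [Complex.abs.nonneg w])
  by_cases hw : w = 0
  · subst hw
    rw [show ((u z / v z : ℝ) : ℂ) * z - ((u 0 / v 0 : ℝ) : ℂ) * 0
        = ((u z / v z : ℝ) : ℂ) * z by ring, sub_zero]
    exact le_trans (key z) (by linarith [Complex.abs.nonneg z])
  have hvz := hv0 z hz
  have hvw := hv0 w hw
  by_cases hcase : Complex.abs (z - w) ≤ v z
  · -- main case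
    have step1 : Complex.abs (((u z / v z : ℝ) : ℂ) * z - ((u w / v w : ℝ) : ℂ) * w)
        ≤ (u z / v z) * Complex.abs (z - w) + |u z / v z - u w / v w| * Complex.abs w := by
      have : ((u z / v z : ℝ) : ℂ) * z - ((u w / v w : ℝ) : ℂ) * w
          = ((u z / v z : ℝ) : ℂ) * (z - w) + (((u z / v z : ℝ) : ℂ) - ((u w / v w : ℝ) : ℂ)) * w := by
        ring
      rw [this]
      refine le_trans (Complex.abs.add_le _ _) ?_
      rw [map_mul, map_mul, Complex.abs_ofReal, ← Complex.ofReal_sub, Complex.abs_ofReal,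
        abs_of_nonneg (div_nonneg (hu0 z) hvz.le)]
    have hq : u z / v z ≤ 2 := (div_le_iff₀ hvz).mpr (huv z)
    have hdiff : |u z / v z - u w / v w| ≤ 3 * Complex.abs (z - w) / v z := by
      rw [div_sub_div _ _ hvz.ne' hvw.ne']
      rw [abs_div, abs_of_pos (mul_pos hvz hvw)]
      rw [div_le_div_iff₀ (mul_pos hvz hvw) hvz]
      have expand : u z * v w - v z * u w = (u z - u w) * v w + u w * (v w - v z) := by ring
      have b1 : |(u z - u w) * v w| ≤ Complex.abs (z - w) * v w := by
        rw [abs_mul, abs_of_pos hvw]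
        exact mul_le_mul_of_nonneg_right (hul z w) hvw.le
      have b2 : |u w * (v w - v z)| ≤ 2 * v w * Complex.abs (z - w) := by
        rw [abs_mul, abs_of_nonneg (hu0 w)]
        calc u w * |v w - v z| ≤ (2 * v w) * Complex.abs (z - w) := by
              have h1 : |v w - v z| ≤ Complex.abs (z - w) := by
                rw [abs_sub_comm]; exact le_trans (hvl z w) (le_refl _)
              exact mul_le_mul (huv w) h1 (abs_nonneg _) (by positivity)
          _ = 2 * v w * Complex.abs (z - w) := by ring
      have hnum : |u z * v w - v z * u w| ≤ 3 * Complex.abs (z - w) * v w := by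
        calc |u z * v w - v z * u w| ≤ |(u z - u w) * v w| + |u w * (v w - v z)| := by
              rw [expand]; exact abs_add_le _ _
          _ ≤ Complex.abs (z - w) * v w + 2 * v w * Complex.abs (z - w) := add_le_add b1 b2
          _ = 3 * Complex.abs (z - w) * v w := by ring
      nlinarith [abs_nonneg (u z * v w - v z * u w)]
    have hw2 : Complex.abs w ≤ 4 * v z := by
      have h1 : Complex.abs w ≤ 2 * v w := hnv w
      have h2 : v w ≤ v z + Complex.abs (z - w) := by
        have := hvl w z
        have := abs_le.mp this
        rw [show w - z = -(z - w) by ring, Complex.abs.map_neg] at this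
        linarith [this.2]
      linarith
    calc Complex.abs (((u z / v z : ℝ) : ℂ) * z - ((u w / v w : ℝ) : ℂ) * w)
        ≤ (u z / v z) * Complex.abs (z - w) + |u z / v z - u w / v w| * Complex.abs w := step1
      _ ≤ 2 * Complex.abs (z - w) + (3 * Complex.abs (z - w) / v z) * (4 * v z) := by
          refine add_le_add (mul_le_mul_of_nonneg_right hq (Complex.abs.nonneg _)) ?_
          exact mul_le_mul hdiff hw2 (Complex.abs.nonneg _) (by positivity)
      _ = 2 * Complex.abs (z - w) + 12 * Complex.abs (z - w) := by field_simp; ring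
      _ ≤ 14 * Complex.abs (z - w) := by linarith
  · -- far case : v z < |z - w|
    push_neg at hcase
    have habsz : Complex.abs z ≤ 2 * v z := hnv z
    have habsw : Complex.abs w ≤ Complex.abs z + Complex.abs (z - w) := by
      calc Complex.abs w = Complex.abs (z - (z - w)) := by congr 1; ring
        _ ≤ Complex.abs z + Complex.abs (z - w) := asub _ _
    calc Complex.abs (((u z / v z : ℝ) : ℂ) * z - ((u w / v w : ℝ) : ℂ) * w)
        ≤ Complex.abs (((u z / v z : ℝ) : ℂ) * z) + Complex.abs (((u w / v w : ℝ) : ℂ) * w) :=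
          asub _ _
      _ ≤ 2 * Complex.abs z + 2 * Complex.abs w := add_le_add (key z) (key w)
      _ ≤ 2 * (2 * v z) + 2 * (2 * v z + Complex.abs (z - w)) := by
          refine add_le_add (by linarith) ?_
          have : Complex.abs w ≤ 2 * v z + Complex.abs (z - w) := le_trans habsw (by linarith)
          linarith
      _ ≤ 14 * Complex.abs (z - w) := by linarith

lemma sqmap_lip (z w : ℂ) : Complex.abs (sqmap z - sqmap w) ≤ 14 * Complex.abs (z - w) :=
  Tlip Complex.abs nn (fun z => Complex.abs.nonneg z) (fun z hz => nn_pos hz)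
    (fun z => abs_le_two_nn z) (fun z => abs_le_two_nn z)
    (fun z w => Complex.abs.abs_abv_sub_le_abv_sub z w) nn_lip z w

lemma dmap_lip (z w : ℂ) : Complex.abs (dmap z - dmap w) ≤ 14 * Complex.abs (z - w) :=
  Tlip nn Complex.abs (fun z => nn_nonneg z) (fun z hz => Complex.abs.pos hz)
    (fun z => le_trans (nn_le_abs z) (by linarith [Complex.abs.nonneg z]))
    (fun z => by linarith [Complex.abs.nonneg z])
    nn_lip (fun z w => Complex.abs.abs_abv_sub_le_abv_sub z w) z w



/-- clamp to [0,1] -/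
def cl (t : ℝ) : ℝ := max 0 (min 1 t)

lemma cl_mem (t : ℝ) : cl t ∈ Set.Icc (0:ℝ) 1 :=
  ⟨le_max_left _ _, max_le zero_le_one (min_le_left _ _)⟩

lemma cl_of_mem {t : ℝ} (h : t ∈ Set.Icc (0:ℝ) 1) : cl t = t := by
  rw [cl, min_eq_right h.2, max_eq_right h.1]

lemma cl_lip (s t : ℝ) : |cl s - cl t| ≤ |s - t| := by
  rw [cl, cl]
  have h2 : |min 1 s - min 1 t| ≤ |s - t| :=
    le_trans (abs_min_sub_min_le_max _ _ _ _) (by simp)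
  calc |max 0 (min 1 s) - max 0 (min 1 t)| ≤ max |(0:ℝ) - 0| |min 1 s - min 1 t| :=
        abs_max_sub_max_le_max _ _ _ _
    _ ≤ |s - t| := max_le (by simp) h2

/-- gluing a function Lipschitz on consecutive intervals -/
lemma glue1d {X : Type*} [MetricSpace X] (F : ℝ → X) (K : ℝ) (n : ℕ)
    (a : ℕ → ℝ) (hmono : Monotone a)
    (h : ∀ i < n, ∀ x ∈ Set.Icc (a i) (a (i+1)), ∀ y ∈ Set.Icc (a i) (a (i+1)),
      dist (F x) (F y) ≤ K * |x - y|) :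
    ∀ x ∈ Set.Icc (a 0) (a n), ∀ y ∈ Set.Icc (a 0) (a n), dist (F x) (F y) ≤ K * |x - y| := by
  have key : ∀ m, m ≤ n → ∀ x ∈ Set.Icc (a 0) (a m), ∀ y ∈ Set.Icc (a 0) (a m),
      x ≤ y → dist (F x) (F y) ≤ K * (y - x) := by
    intro m
    induction m with
    | zero =>
      intro _ x hx y hy hxy
      have : x = y := by
        have h1 := hx.1; have h2 := hx.2; have h3 := hy.1; have h4 := hy.2; linarith
      simp [this]
    | succ m ih =>
      intro hm x hx y hy hxy
      have hmn : m < n := hm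
      by_cases hy2 : y ≤ a m
      · exact ih (le_of_lt hmn) x ⟨hx.1, le_trans hxy hy2⟩ y ⟨hy.1, hy2⟩ hxy
      · push_neg at hy2
        by_cases hx2 : a m ≤ x
        · have := h m hmn x ⟨hx2, hx.2⟩ y ⟨hy2.le, hy.2⟩
          calc dist (F x) (F y) ≤ K * |x - y| := this
            _ = K * (y - x) := by rw [abs_sub_comm, abs_of_nonneg (by linarith)]
        · push_neg at hx2
          have step1 : dist (F x) (F (a m)) ≤ K * (a m - x) :=
            ih (le_of_lt hmn) x ⟨hx.1, hx2.le⟩ (a m) ⟨hmono (Nat.zero_le m), le_refl _⟩ hx2.le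
          have step2 : dist (F (a m)) (F y) ≤ K * (y - a m) := by
            have := h m hmn (a m) ⟨le_refl _, hmono (Nat.le_succ m)⟩ y ⟨hy2.le, hy.2⟩
            calc dist (F (a m)) (F y) ≤ K * |a m - y| := this
              _ = K * (y - a m) := by rw [abs_sub_comm, abs_of_nonneg (by linarith)]
          calc dist (F x) (F y) ≤ dist (F x) (F (a m)) + dist (F (a m)) (F y) :=
                dist_triangle _ _ _
            _ ≤ K * (a m - x) + K * (y - a m) := add_le_add step1 step2
            _ = K * (y - x) := by ring
  intro x hx y hy
  rcases le_total x y with hxy | hxy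
  · calc dist (F x) (F y) ≤ K * (y - x) := key n (le_refl n) x hx y hy hxy
      _ = K * |x - y| := by rw [abs_sub_comm, abs_of_nonneg (by linarith)]
  · rw [dist_comm]
    calc dist (F y) (F x) ≤ K * (x - y) := key n (le_refl n) y hy x hx hxy
      _ = K * |x - y| := by rw [abs_of_nonneg (by linarith)]

/-- the square boundary assembled from 4 edge maps -/
def sqB {X : Type*} (left right bottom top : ℝ → X) (p : ℝ × ℝ) : X :=
  if p.1 ≤ 0 then left (cl p.2)
  else if 1 ≤ p.1 then right (cl p.2)
  else if p.2 ≤ 0 then bottom (cl p.1)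
  else top (cl p.1)

/-- boundary of unit square -/
def bdS (p : ℝ × ℝ) : Prop :=
  p.1 ∈ Set.Icc (0:ℝ) 1 ∧ p.2 ∈ Set.Icc (0:ℝ) 1 ∧ (p.1 = 0 ∨ p.1 = 1 ∨ p.2 = 0 ∨ p.2 = 1)

lemma sqB_eval_left {X : Type*} (left right bottom top : ℝ → X) (x y : ℝ) (hx : x ≤ 0) :
    sqB left right bottom top (x, y) = left (cl y) := by
  simp only [sqB]
  rw [if_pos hx]

lemma sqB_eval_right {X : Type*} (left right bottom top : ℝ → X) (x y : ℝ)
    (hx0 : ¬ x ≤ 0) (hx1 : 1 ≤ x) :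
    sqB left right bottom top (x, y) = right (cl y) := by
  simp only [sqB]
  rw [if_neg hx0, if_pos hx1]

lemma sqB_eval_bottom {X : Type*} (left right bottom top : ℝ → X) (x y : ℝ)
    (hx0 : ¬ x ≤ 0) (hx1 : ¬ 1 ≤ x) (hy : y ≤ 0) :
    sqB left right bottom top (x, y) = bottom (cl x) := by
  simp only [sqB]
  rw [if_neg hx0, if_neg hx1, if_pos hy]

lemma sqB_eval_top {X : Type*} (left right bottom top : ℝ → X) (x y : ℝ)
    (hx0 : ¬ x ≤ 0) (hx1 : ¬ 1 ≤ x) (hy : ¬ y ≤ 0) :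
    sqB left right bottom top (x, y) = top (cl x) := by
  simp only [sqB]
  rw [if_neg hx0, if_neg hx1, if_neg hy]

lemma sqB_lip {X : Type*} [MetricSpace X] (left right bottom top : ℝ → X) (ℓ : ℝ)
    (hle : ∀ s ∈ Set.Icc (0:ℝ) 1, ∀ t ∈ Set.Icc (0:ℝ) 1, dist (left s) (left t) ≤ ℓ * |s - t|)
    (hri : ∀ s ∈ Set.Icc (0:ℝ) 1, ∀ t ∈ Set.Icc (0:ℝ) 1, dist (right s) (right t) ≤ ℓ * |s - t|)
    (hbo : ∀ s ∈ Set.Icc (0:ℝ) 1, ∀ t ∈ Set.Icc (0:ℝ) 1, dist (bottom s) (bottom t) ≤ ℓ * |s - t|)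
    (hto : ∀ s ∈ Set.Icc (0:ℝ) 1, ∀ t ∈ Set.Icc (0:ℝ) 1, dist (top s) (top t) ≤ ℓ * |s - t|)
    (hℓ : 0 ≤ ℓ)
    (c1 : bottom 0 = left 0) (c2 : bottom 1 = right 0)
    (c3 : top 0 = left 1) (c4 : top 1 = right 1)
    (p q : ℝ × ℝ) (hp : bdS p) (hq : bdS q) :
    dist (sqB left right bottom top p) (sqB left right bottom top q)
      ≤ 3 * ℓ * max |p.1 - q.1| |p.2 - q.2| := by
  have classify : ∀ r : ℝ × ℝ, bdS r →
      (r.1 = 0 ∧ sqB left right bottom top r = left r.2) ∨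
      (r.1 = 1 ∧ sqB left right bottom top r = right r.2) ∨
      (r.2 = 0 ∧ sqB left right bottom top r = bottom r.1) ∨
      (r.2 = 1 ∧ sqB left right bottom top r = top r.1) := by
    intro r hr
    obtain ⟨hr1, hr2, hr3⟩ := hr
    unfold sqB
    split_ifs with h1 h2 h3
    · exact Or.inl ⟨le_antisymm h1 hr1.1, by rw [cl_of_mem hr2]⟩
    · exact Or.inr (Or.inl ⟨le_antisymm hr1.2 h2, by rw [cl_of_mem hr2]⟩)
    · exact Or.inr (Or.inr (Or.inl ⟨le_antisymm h3 hr2.1, by rw [cl_of_mem hr1]⟩))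
    · push_neg at h1 h2 h3
      have : r.2 = 1 := by
        rcases hr3 with h | h | h | h
        · exact absurd h (by linarith)
        · exact absurd h (by linarith)
        · exact absurd h (by linarith)
        · exact h
      exact Or.inr (Or.inr (Or.inr ⟨this, by rw [cl_of_mem hr1]⟩))
  have hp1 := hp.1; have hp2 := hp.2.1
  have hq1 := hq.1; have hq2 := hq.2.1
  set M := max |p.1 - q.1| |p.2 - q.2| with hM
  have hM1 : |p.1 - q.1| ≤ M := le_max_left _ _
  have hM2 : |p.2 - q.2| ≤ M := le_max_right _ _
  have hM0 : 0 ≤ M := le_trans (abs_nonneg _) hM1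
  have hMℓ : 0 ≤ ℓ * M := mul_nonneg hℓ hM0
  have i0 : (0:ℝ) ∈ Set.Icc (0:ℝ) 1 := ⟨le_refl 0, zero_le_one⟩
  have i1 : (1:ℝ) ∈ Set.Icc (0:ℝ) 1 := ⟨zero_le_one, le_refl 1⟩
  -- generic side-to-side bounds
  have LL : dist (left p.2) (left q.2) ≤ ℓ * M :=
    le_trans (hle _ hp2 _ hq2) (mul_le_mul_of_nonneg_left hM2 hℓ)
  have RR : dist (right p.2) (right q.2) ≤ ℓ * M :=
    le_trans (hri _ hp2 _ hq2) (mul_le_mul_of_nonneg_left hM2 hℓ)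
  have BB : dist (bottom p.1) (bottom q.1) ≤ ℓ * M :=
    le_trans (hbo _ hp1 _ hq1) (mul_le_mul_of_nonneg_left hM1 hℓ)
  have TT : dist (top p.1) (top q.1) ≤ ℓ * M :=
    le_trans (hto _ hp1 _ hq1) (mul_le_mul_of_nonneg_left hM1 hℓ)
  -- adjacency bounds (stated for generic coordinates a b in [0,1])
  have LB : ∀ a ∈ Set.Icc (0:ℝ) 1, ∀ b ∈ Set.Icc (0:ℝ) 1,
      dist (left a) (bottom b) ≤ ℓ * |a - 0| + ℓ * |0 - b| := by
    intro a ha b hb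
    calc dist (left a) (bottom b) ≤ dist (left a) (left 0) + dist (left 0) (bottom b) :=
          dist_triangle _ _ _
      _ ≤ ℓ * |a - 0| + ℓ * |0 - b| := by
          refine add_le_add (hle _ ha _ i0) ?_
          rw [← c1]; exact hbo _ i0 _ hb
  have LT : ∀ a ∈ Set.Icc (0:ℝ) 1, ∀ b ∈ Set.Icc (0:ℝ) 1,
      dist (left a) (top b) ≤ ℓ * |a - 1| + ℓ * |0 - b| := by
    intro a ha b hb
    calc dist (left a) (top b) ≤ dist (left a) (left 1) + dist (left 1) (top b) :=
          dist_triangle _ _ _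
      _ ≤ ℓ * |a - 1| + ℓ * |0 - b| := by
          refine add_le_add (hle _ ha _ i1) ?_
          rw [← c3]; exact hto _ i0 _ hb
  have RB : ∀ a ∈ Set.Icc (0:ℝ) 1, ∀ b ∈ Set.Icc (0:ℝ) 1,
      dist (right a) (bottom b) ≤ ℓ * |a - 0| + ℓ * |1 - b| := by
    intro a ha b hb
    calc dist (right a) (bottom b) ≤ dist (right a) (right 0) + dist (right 0) (bottom b) :=
          dist_triangle _ _ _
      _ ≤ ℓ * |a - 0| + ℓ * |1 - b| := by
          refine add_le_add (hri _ ha _ i0) ?_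
          rw [← c2]; exact hbo _ i1 _ hb
  have RT : ∀ a ∈ Set.Icc (0:ℝ) 1, ∀ b ∈ Set.Icc (0:ℝ) 1,
      dist (right a) (top b) ≤ ℓ * |a - 1| + ℓ * |1 - b| := by
    intro a ha b hb
    calc dist (right a) (top b) ≤ dist (right a) (right 1) + dist (right 1) (top b) :=
          dist_triangle _ _ _
      _ ≤ ℓ * |a - 1| + ℓ * |1 - b| := by
          refine add_le_add (hri _ ha _ i1) ?_
          rw [← c4]; exact hto _ i1 _ hb
  -- opposite bounds
  have LR : ∀ a ∈ Set.Icc (0:ℝ) 1, ∀ b ∈ Set.Icc (0:ℝ) 1,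
      dist (left a) (right b) ≤ 3 * ℓ := by
    intro a ha b hb
    have h1 : dist (left a) (bottom 1) ≤ ℓ * |a - 0| + ℓ * |0 - 1| := LB a ha 1 i1
    have h2 : dist (bottom 1) (right b) ≤ ℓ * |0 - b| := by
      rw [c2]; exact hri _ i0 _ hb
    have e1 : |a - 0| ≤ 1 := by rw [sub_zero, abs_of_nonneg ha.1]; exact ha.2
    have e2 : |(0:ℝ) - 1| = 1 := by norm_num
    have e3 : |0 - b| ≤ 1 := by rw [zero_sub, abs_neg, abs_of_nonneg hb.1]; exact hb.2
    calc dist (left a) (right b) ≤ dist (left a) (bottom 1) + dist (bottom 1) (right b) :=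
          dist_triangle _ _ _
      _ ≤ 3 * ℓ := by rw [e2] at h1; nlinarith
  have BT : ∀ a ∈ Set.Icc (0:ℝ) 1, ∀ b ∈ Set.Icc (0:ℝ) 1,
      dist (bottom a) (top b) ≤ 3 * ℓ := by
    intro a ha b hb
    have h1 : dist (bottom a) (left 0) ≤ ℓ * 1 := by
      rw [← c1]
      refine le_trans (hbo _ ha _ i0) ?_
      have : |a - 0| ≤ 1 := by rw [sub_zero, abs_of_nonneg ha.1]; exact ha.2
      nlinarith
    have h2 : dist (left 0) (left 1) ≤ ℓ * 1 := by
      refine le_trans (hle _ i0 _ i1) ?_; norm_num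
    have h3 : dist (left 1) (top b) ≤ ℓ * 1 := by
      rw [← c3]
      refine le_trans (hto _ i0 _ hb) ?_
      have : |(0:ℝ) - b| ≤ 1 := by rw [zero_sub, abs_neg, abs_of_nonneg hb.1]; exact hb.2
      nlinarith
    calc dist (bottom a) (top b)
        ≤ dist (bottom a) (left 0) + dist (left 0) (left 1) + dist (left 1) (top b) :=
          dist_triangle4 _ _ _ _
      _ ≤ 3 * ℓ := by linarith
  -- now the case bash
  rcases classify p hp with ⟨e1, v1⟩ | ⟨e1, v1⟩ | ⟨e1, v1⟩ | ⟨e1, v1⟩ <;>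
    rcases classify q hq with ⟨e2, v2⟩ | ⟨e2, v2⟩ | ⟨e2, v2⟩ | ⟨e2, v2⟩ <;>
    rw [v1, v2]
  -- (L,L)
  · calc dist (left p.2) (left q.2) ≤ ℓ * M := LL
      _ ≤ 3 * ℓ * M := by nlinarith
  -- (L,R)
  · have hMbig : (1:ℝ) ≤ M := by
      refine le_trans ?_ hM1
      rw [e1, e2]; norm_num
    calc dist (left p.2) (right q.2) ≤ 3 * ℓ := LR _ hp2 _ hq2
      _ ≤ 3 * ℓ * M := by nlinarith
  -- (L,B)
  · have := LB p.2 hp2 q.1 hq1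
    have b1 : |p.2 - 0| ≤ M := by rw [← e2]; exact hM2
    have b2 : |(0:ℝ) - q.1| ≤ M := by rw [← e1]; exact hM1
    calc dist (left p.2) (bottom q.1) ≤ ℓ * |p.2 - 0| + ℓ * |0 - q.1| := this
      _ ≤ 3 * ℓ * M := by nlinarith
  -- (L,T)
  · have := LT p.2 hp2 q.1 hq1
    have b1 : |p.2 - 1| ≤ M := by rw [← e2]; exact hM2
    have b2 : |(0:ℝ) - q.1| ≤ M := by rw [← e1]; exact hM1
    calc dist (left p.2) (top q.1) ≤ ℓ * |p.2 - 1| + ℓ * |0 - q.1| := this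
      _ ≤ 3 * ℓ * M := by nlinarith
  -- (R,L)
  · have hMbig : (1:ℝ) ≤ M := by
      refine le_trans ?_ hM1
      rw [e1, e2]; norm_num
    rw [dist_comm]
    calc dist (left q.2) (right p.2) ≤ 3 * ℓ := LR _ hq2 _ hp2
      _ ≤ 3 * ℓ * M := by nlinarith
  -- (R,R)
  · calc dist (right p.2) (right q.2) ≤ ℓ * M := RR
      _ ≤ 3 * ℓ * M := by nlinarith
  -- (R,B)
  · have := RB p.2 hp2 q.1 hq1
    have b1 : |p.2 - 0| ≤ M := by rw [← e2]; exact hM2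
    have b2 : |(1:ℝ) - q.1| ≤ M := by rw [← e1]; exact hM1
    calc dist (right p.2) (bottom q.1) ≤ ℓ * |p.2 - 0| + ℓ * |1 - q.1| := this
      _ ≤ 3 * ℓ * M := by nlinarith
  -- (R,T)
  · have := RT p.2 hp2 q.1 hq1
    have b1 : |p.2 - 1| ≤ M := by rw [← e2]; exact hM2
    have b2 : |(1:ℝ) - q.1| ≤ M := by rw [← e1]; exact hM1
    calc dist (right p.2) (top q.1) ≤ ℓ * |p.2 - 1| + ℓ * |1 - q.1| := this
      _ ≤ 3 * ℓ * M := by nlinarith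
  -- (B,L)
  · have := LB q.2 hq2 p.1 hp1
    have b1 : |q.2 - 0| ≤ M := by rw [← e1, abs_sub_comm]; exact hM2
    have b2 : |(0:ℝ) - p.1| ≤ M := by rw [← e2, abs_sub_comm]; exact hM1
    rw [dist_comm]
    calc dist (left q.2) (bottom p.1) ≤ ℓ * |q.2 - 0| + ℓ * |0 - p.1| := this
      _ ≤ 3 * ℓ * M := by nlinarith
  -- (B,R)
  · have := RB q.2 hq2 p.1 hp1
    have b1 : |q.2 - 0| ≤ M := by rw [← e1, abs_sub_comm]; exact hM2
    have b2 : |(1:ℝ) - p.1| ≤ M := by rw [← e2, abs_sub_comm]; exact hM1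
    rw [dist_comm]
    calc dist (right q.2) (bottom p.1) ≤ ℓ * |q.2 - 0| + ℓ * |1 - p.1| := this
      _ ≤ 3 * ℓ * M := by nlinarith
  -- (B,B)
  · calc dist (bottom p.1) (bottom q.1) ≤ ℓ * M := BB
      _ ≤ 3 * ℓ * M := by nlinarith
  -- (B,T)
  · have hMbig : (1:ℝ) ≤ M := by
      refine le_trans ?_ hM2
      rw [e1, e2]; norm_num
    calc dist (bottom p.1) (top q.1) ≤ 3 * ℓ := BT _ hp1 _ hq1
      _ ≤ 3 * ℓ * M := by nlinarith
  -- (T,L)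
  · have := LT q.2 hq2 p.1 hp1
    have b1 : |q.2 - 1| ≤ M := by rw [← e1, abs_sub_comm]; exact hM2
    have b2 : |(0:ℝ) - p.1| ≤ M := by rw [← e2, abs_sub_comm]; exact hM1
    rw [dist_comm]
    calc dist (left q.2) (top p.1) ≤ ℓ * |q.2 - 1| + ℓ * |0 - p.1| := this
      _ ≤ 3 * ℓ * M := by nlinarith
  -- (T,R)
  · have := RT q.2 hq2 p.1 hp1
    have b1 : |q.2 - 1| ≤ M := by rw [← e1, abs_sub_comm]; exact hM2
    have b2 : |(1:ℝ) - p.1| ≤ M := by rw [← e2, abs_sub_comm]; exact hM1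
    rw [dist_comm]
    calc dist (right q.2) (top p.1) ≤ ℓ * |q.2 - 1| + ℓ * |1 - p.1| := this
      _ ≤ 3 * ℓ * M := by nlinarith
  -- (T,B)
  · have hMbig : (1:ℝ) ≤ M := by
      refine le_trans ?_ hM2
      rw [e1, e2]; norm_num
    rw [dist_comm]
    calc dist (bottom q.1) (top p.1) ≤ 3 * ℓ := BT _ hq1 _ hp1
      _ ≤ 3 * ℓ * M := by nlinarith
  -- (T,T)
  · calc dist (top p.1) (top q.1) ≤ ℓ * M := TT
      _ ≤ 3 * ℓ * M := by nlinarith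


end LFS
end

set_option maxHeartbeats 2000000 in
open LFS in
theorem lipschitz_filling_of_small_scale {X : Type*} [MetricSpace X] [CompleteSpace X]
    (D C : ℝ) (hD : 0 < D) (hC : 1 ≤ C)
    (hsmall : ∀ (L : ℝ) (γ : ℂ → X), 0 < L → L < D →
      (∀ x ∈ sphere (0:ℂ) 1, ∀ y ∈ sphere (0:ℂ) 1, dist (γ x) (γ y) ≤ L * dist x y) →
      ∃ f : ℂ → X, (∀ x ∈ sphere (0:ℂ) 1, f x = γ x) ∧
        ∀ x ∈ closedBall (0:ℂ) 1, ∀ y ∈ closedBall (0:ℂ) 1,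
          dist (f x) (f y) ≤ C * L * dist x y)
    (hgeo : ∀ x y : X, dist x y < D → ∃ p : ℝ → X, p 0 = x ∧ p 1 = y ∧
      ∀ s ∈ Set.Icc (0:ℝ) 1, ∀ t ∈ Set.Icc (0:ℝ) 1,
        dist (p s) (p t) = |s - t| * dist x y)
    (γ : ℂ → X) (L : ℝ)
    (hγlip : ∀ x ∈ sphere (0:ℂ) 1, ∀ y ∈ sphere (0:ℂ) 1,
      dist (γ x) (γ y) ≤ L * dist x y)
    (hnull : ∃ g : ℂ → X, ContinuousOn g (closedBall (0:ℂ) 1) ∧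
      ∀ x ∈ sphere (0:ℂ) 1, g x = γ x) :
    ∃ (K : ℝ) (f : ℂ → X), (∀ x ∈ sphere (0:ℂ) 1, f x = γ x) ∧
      ∀ x ∈ closedBall (0:ℂ) 1, ∀ y ∈ closedBall (0:ℂ) 1,
        dist (f x) (f y) ≤ K * dist x y := by
  classical
  obtain ⟨g, hgc, hgb⟩ := hnull
  have sphmem : ∀ x : ℂ, x ∈ sphere (0:ℂ) 1 ↔ Complex.abs x = 1 := by
    intro x; simp [Complex.dist_eq]
  have ballmem : ∀ x : ℂ, x ∈ closedBall (0:ℂ) 1 ↔ Complex.abs x ≤ 1 := by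
    intro x; simp [Complex.dist_eq]
  set L₀ : ℝ := max L 1 with hL₀def
  have hL₀ : 0 < L₀ := lt_of_lt_of_le one_pos (le_max_right _ _)
  have hγ' : ∀ x ∈ sphere (0:ℂ) 1, ∀ y ∈ sphere (0:ℂ) 1,
      dist (γ x) (γ y) ≤ L₀ * dist x y := fun x hx y hy =>
    le_trans (hγlip x hx y hy) (mul_le_mul_of_nonneg_right (le_max_left _ _) dist_nonneg)
  -- the closed square Q = {nn ≤ 1}
  set Q : Set ℂ := {p | nn p ≤ 1} with hQdef
  have hnncont : Continuous nn :=
    Continuous.max (continuous_abs.comp Complex.continuous_re)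
      (continuous_abs.comp Complex.continuous_im)
  have hQc : IsCompact Q := by
    refine Metric.isCompact_of_isClosed_isBounded (isClosed_le hnncont continuous_const) ?_
    refine Bornology.IsBounded.subset (Metric.isBounded_closedBall (x := (0:ℂ)) (r := 2)) ?_
    intro p hp
    simp only [Metric.mem_closedBall, Complex.dist_eq, sub_zero]
    exact le_trans (abs_le_two_nn p) (by simpa using mul_le_mul_of_nonneg_left hp (by norm_num : (0:ℝ) ≤ 2))
  have hdlip : ∀ x y : ℂ, dist (dmap x) (dmap y) ≤ 14 * dist x y := by
    intro x y; rw [Complex.dist_eq, Complex.dist_eq]; exact dmap_lip x y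
  have hdcont : Continuous dmap := by
    have : LipschitzWith 14 dmap := LipschitzWith.of_dist_le_mul (fun x y => by
      simpa using hdlip x y)
    exact this.continuous
  have hg'c : ContinuousOn (fun p => g (dmap p)) Q := by
    refine ContinuousOn.comp hgc hdcont.continuousOn ?_
    intro p hp
    rw [ballmem, abs_dmap]
    exact hp
  set ε : ℝ := D / 50 with hεdef
  have hε : 0 < ε := by positivity
  obtain ⟨δ, hδ, hδp⟩ := (Metric.uniformContinuousOn_iff).mp
    (hQc.uniformContinuousOn_of_continuous hg'c) ε hε
  -- choose n
  obtain ⟨n, hnbig⟩ := exists_nat_gt (2/δ + 56 * L₀/ε + 1)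
  have hnpos' : (0:ℝ) < 2/δ + 56 * L₀/ε + 1 := by positivity
  have hnposR : (0:ℝ) < n := lt_trans hnpos' hnbig
  have hn1 : 1 ≤ n := by
    have : 0 < n := by exact_mod_cast hnposR
    omega
  set hh : ℝ := 2 / n with hhdef
  have hhpos : 0 < hh := by positivity
  have haux1 : (0:ℝ) ≤ 56 * L₀ / ε := by positivity
  have haux2 : (0:ℝ) ≤ 2 / δ := by positivity
  have hstep1 : hh < δ := by
    have hn2 : 2/δ < n := by linarith
    rw [div_lt_iff₀ hδ] at hn2
    rw [hhdef, div_lt_iff₀ hnposR]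
    linarith
  have hstep2 : 28 * L₀ * hh ≤ ε := by
    have hn3 : 56 * L₀ / ε < n := by linarith
    rw [div_lt_iff₀ hε] at hn3
    have e : 28 * L₀ * hh = 56 * L₀ / n := by rw [hhdef]; ring
    rw [e, div_le_iff₀ hnposR]
    linarith
  -- grid
  set av : ℕ → ℝ := fun i => -1 + 2 * i / n with havdef
  have hav0 : av 0 = -1 := by simp [havdef]
  have havn : av n = 1 := by
    simp only [havdef]
    field_simp
    norm_num
  have havmono : Monotone av := by
    intro i j hij
    simp only [havdef]
    have : (i:ℝ) ≤ j := by exact_mod_cast hij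
    have h2 : 2 * (i:ℝ) / n ≤ 2 * j / n := by gcongr
    linarith
  have havsucc : ∀ i : ℕ, av (i + 1) = av i + hh := by
    intro i
    simp only [havdef, hhdef]
    push_cast
    field_simp
    ring
  have havmem : ∀ i : ℕ, i ≤ n → av i ∈ Set.Icc (-1:ℝ) 1 := by
    intro i hi
    constructor
    · simp only [havdef]
      have : (0:ℝ) ≤ 2 * i / n := by positivity
      linarith
    · simp only [havdef]
      have : (i:ℝ) ≤ n := by exact_mod_cast hi
      rw [← sub_nonneg]
      have : 2 * (i:ℝ) / n ≤ 2 := by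
        rw [div_le_iff₀ hnposR]; linarith
      linarith
  set zz : ℕ → ℕ → ℂ := fun i j => Complex.mk (av i) (av j) with hzzdef
  set V : ℕ → ℕ → X := fun i j => g (dmap (zz i j)) with hVdef
  have hzzQ : ∀ i j, i ≤ n → j ≤ n → zz i j ∈ Q := by
    intro i j hi hj
    have h1 := havmem i hi; have h2 := havmem j hj
    simp only [hQdef, Set.mem_setOf_eq, nn]
    exact max_le (abs_le.mpr ⟨h1.1, h1.2⟩) (abs_le.mpr ⟨h2.1, h2.2⟩)
  -- distance between g-values at nearby points of Q
  have hclose : ∀ p q : ℂ, p ∈ Q → q ∈ Q → Complex.abs (p - q) ≤ hh →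
      dist (g (dmap p)) (g (dmap q)) ≤ ε := by
    intro p q hp hq hpq
    refine le_of_lt (hδp p hp q hq ?_)
    rw [Complex.dist_eq]
    exact lt_of_le_of_lt hpq hstep1
  -- geodesics, totalized
  have geoEx : ∀ x y : X, ∃ p : ℝ → X, dist x y < D → (p 0 = x ∧ p 1 = y ∧
      ∀ s ∈ Set.Icc (0:ℝ) 1, ∀ t ∈ Set.Icc (0:ℝ) 1, dist (p s) (p t) = |s - t| * dist x y) := by
    intro x y
    by_cases hxy : dist x y < D
    · obtain ⟨p, h1, h2, h3⟩ := hgeo x y hxy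
      exact ⟨p, fun _ => ⟨h1, h2, h3⟩⟩
    · exact ⟨fun _ => x, fun hc => absurd hc hxy⟩
  choose geod hgeod using geoEx
  have hεD : ε < D := by
    rw [hεdef]; linarith
  -- edges
  set hedge : ℕ → ℕ → ℝ → X := fun i j t =>
    if j = 0 ∨ j = n then γ (dmap (Complex.mk (av i + t * hh) (av j)))
    else geod (V i j) (V (i+1) j) t with hhedgedef
  set vedge : ℕ → ℕ → ℝ → X := fun i j t =>
    if i = 0 ∨ i = n then γ (dmap (Complex.mk (av i) (av j + t * hh)))
    else geod (V i j) (V i (j+1)) t with hvedgedef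
  -- complex arithmetic helpers
  have habs_mk_re : ∀ a b c : ℝ, Complex.abs (Complex.mk a c - Complex.mk b c) = |a - b| := by
    intro a b c
    have e : Complex.mk a c - Complex.mk b c = ((a - b : ℝ) : ℂ) := by
      apply Complex.ext <;> simp
    rw [e, Complex.abs_ofReal]
  have habs_mk_im : ∀ a b c : ℝ, Complex.abs (Complex.mk c a - Complex.mk c b) = |a - b| := by
    intro a b c
    have e : Complex.mk c a - Complex.mk c b = Complex.mk 0 (a - b) := by
      apply Complex.ext <;> simp
    rw [e]
    rw [show Complex.mk 0 (a-b) = ((a - b : ℝ) : ℂ) * Complex.I by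
      apply Complex.ext <;> simp]
    rw [map_mul, Complex.abs_ofReal, Complex.abs_I, mul_one]
  have hnn_mk : ∀ a b : ℝ, a ∈ Set.Icc (-1:ℝ) 1 → |b| = 1 → nn (Complex.mk a b) = 1 := by
    intro a b ha hb
    have : |a| ≤ 1 := abs_le.mpr ⟨ha.1, ha.2⟩
    rw [nn]
    rw [show (Complex.mk a b).re = a from rfl, show (Complex.mk a b).im = b from rfl, hb]
    exact max_eq_right this
  have hnn_mk' : ∀ a b : ℝ, |a| = 1 → b ∈ Set.Icc (-1:ℝ) 1 → nn (Complex.mk a b) = 1 := by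
    intro a b ha hb
    have : |b| ≤ 1 := abs_le.mpr ⟨hb.1, hb.2⟩
    rw [nn]
    rw [show (Complex.mk a b).re = a from rfl, show (Complex.mk a b).im = b from rfl, ha]
    exact max_eq_left this
  have hnn_mk_le : ∀ a b : ℝ, a ∈ Set.Icc (-1:ℝ) 1 → b ∈ Set.Icc (-1:ℝ) 1 →
      Complex.mk a b ∈ Q := by
    intro a b ha hb
    simp only [hQdef, Set.mem_setOf_eq, nn]
    exact max_le (abs_le.mpr ⟨ha.1, ha.2⟩) (abs_le.mpr ⟨hb.1, hb.2⟩)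
  have havI : ∀ i, i < n → ∀ t ∈ Set.Icc (0:ℝ) 1, av i + t * hh ∈ Set.Icc (-1:ℝ) 1 := by
    intro i hi t ht
    have h1 := (havmem i (le_of_lt hi)).1
    have h2 := (havmem (i+1) hi).2
    have e := havsucc i
    constructor
    · nlinarith [ht.1, hhpos.le]
    · nlinarith [ht.2, hhpos.le]
  -- sphere boundary values
  have hsph : ∀ p : ℂ, nn p = 1 → dmap p ∈ sphere (0:ℂ) 1 := by
    intro p hp
    rw [sphmem, abs_dmap]; exact hp
  have hgγ : ∀ p : ℂ, nn p = 1 → g (dmap p) = γ (dmap p) := fun p hp => hgb _ (hsph p hp)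
  have hγd : ∀ p q : ℂ, nn p = 1 → nn q = 1 →
      dist (γ (dmap p)) (γ (dmap q)) ≤ 14 * L₀ * Complex.abs (p - q) := by
    intro p q hp hq
    calc dist (γ (dmap p)) (γ (dmap q)) ≤ L₀ * dist (dmap p) (dmap q) :=
          hγ' _ (hsph p hp) _ (hsph q hq)
      _ ≤ L₀ * (14 * Complex.abs (p - q)) := by
          rw [Complex.dist_eq]
          exact mul_le_mul_of_nonneg_left (dmap_lip p q) hL₀.le
      _ = 14 * L₀ * Complex.abs (p - q) := by ring
  have hnnz : ∀ i j, i ≤ n → j ≤ n → (i = 0 ∨ i = n ∨ j = 0 ∨ j = n) → nn (zz i j) = 1 := by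
    intro i j hi hj hb
    have h1 := havmem i hi; have h2 := havmem j hj
    have e0 : |av 0| = 1 := by rw [hav0]; norm_num
    have en : |av n| = 1 := by rw [havn]; norm_num
    rcases hb with rfl | rfl | rfl | rfl
    · exact hnn_mk' _ _ e0 h2
    · exact hnn_mk' _ _ en h2
    · exact hnn_mk _ _ h1 e0
    · exact hnn_mk _ _ h1 en
  -- adjacent vertex distances
  have hVadjH : ∀ i j, i < n → j ≤ n → dist (V i j) (V (i+1) j) ≤ ε := by
    intro i j hi hj
    refine hclose _ _ (hzzQ i j (le_of_lt hi) hj) (hzzQ (i+1) j hi hj) ?_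
    rw [show zz i j = Complex.mk (av i) (av j) from rfl,
      show zz (i+1) j = Complex.mk (av (i+1)) (av j) from rfl, habs_mk_re, havsucc]
    rw [show av i - (av i + hh) = -hh by ring, abs_neg, abs_of_pos hhpos]
  have hVadjV : ∀ i j, i ≤ n → j < n → dist (V i j) (V i (j+1)) ≤ ε := by
    intro i j hi hj
    refine hclose _ _ (hzzQ i j hi (le_of_lt hj)) (hzzQ i (j+1) hi hj) ?_
    rw [show zz i j = Complex.mk (av i) (av j) from rfl,
      show zz i (j+1) = Complex.mk (av i) (av (j+1)) from rfl, habs_mk_im, havsucc]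
    rw [show av j - (av j + hh) = -hh by ring, abs_neg, abs_of_pos hhpos]
  -- edge endpoints
  have hedge0 : ∀ i j, i < n → j ≤ n → hedge i j 0 = V i j := by
    intro i j hi hj
    simp only [hhedgedef]
    split_ifs with hb
    · rw [show av i + 0 * hh = av i by ring]
      exact (hgγ (zz i j) (hnnz i j (le_of_lt hi) hj (Or.inr (Or.inr hb)))).symm
    · exact (hgeod (V i j) (V (i+1) j) (lt_of_le_of_lt (hVadjH i j hi hj) hεD)).1
  have hedge1 : ∀ i j, i < n → j ≤ n → hedge i j 1 = V (i+1) j := by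
    intro i j hi hj
    simp only [hhedgedef]
    split_ifs with hb
    · rw [show av i + 1 * hh = av (i+1) by rw [havsucc]; ring]
      exact (hgγ (zz (i+1) j) (hnnz (i+1) j hi hj (Or.inr (Or.inr hb)))).symm
    · exact (hgeod (V i j) (V (i+1) j) (lt_of_le_of_lt (hVadjH i j hi hj) hεD)).2.1
  have hvedge0 : ∀ i j, i ≤ n → j < n → vedge i j 0 = V i j := by
    intro i j hi hj
    simp only [hvedgedef]
    split_ifs with hb
    · rw [show av j + 0 * hh = av j by ring]
      exact (hgγ (zz i j) (hnnz i j hi (le_of_lt hj) (by tauto))).symm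
    · exact (hgeod (V i j) (V i (j+1)) (lt_of_le_of_lt (hVadjV i j hi hj) hεD)).1
  have hvedge1 : ∀ i j, i ≤ n → j < n → vedge i j 1 = V i (j+1) := by
    intro i j hi hj
    simp only [hvedgedef]
    split_ifs with hb
    · rw [show av j + 1 * hh = av (j+1) by rw [havsucc]; ring]
      exact (hgγ (zz i (j+1)) (hnnz i (j+1) hi hj (by tauto))).symm
    · exact (hgeod (V i j) (V i (j+1)) (lt_of_le_of_lt (hVadjV i j hi hj) hεD)).2.1
  -- edge Lipschitz bounds
  have hL₀h : 14 * L₀ * hh ≤ ε := by nlinarith [hL₀.le, hhpos.le]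
  have hedgeLip : ∀ i j, i < n → j ≤ n → ∀ s ∈ Set.Icc (0:ℝ) 1, ∀ t ∈ Set.Icc (0:ℝ) 1,
      dist (hedge i j s) (hedge i j t) ≤ ε * |s - t| := by
    intro i j hi hj s hs t ht
    simp only [hhedgedef]
    split_ifs with hb
    · have hbj : |av j| = 1 := by
        rcases hb with rfl | rfl
        · rw [hav0]; norm_num
        · rw [havn]; norm_num
      refine le_trans (hγd _ _ (hnn_mk _ _ (havI i hi s hs) hbj)
        (hnn_mk _ _ (havI i hi t ht) hbj)) ?_
      rw [habs_mk_re, show av i + s * hh - (av i + t * hh) = (s - t) * hh by ring,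
        abs_mul, abs_of_pos hhpos]
      calc 14 * L₀ * (|s - t| * hh) = (14 * L₀ * hh) * |s - t| := by ring
        _ ≤ ε * |s - t| := mul_le_mul_of_nonneg_right hL₀h (abs_nonneg _)
    · have hd := hgeod (V i j) (V (i+1) j) (lt_of_le_of_lt (hVadjH i j hi hj) hεD)
      rw [hd.2.2 s hs t ht]
      calc |s - t| * dist (V i j) (V (i+1) j) ≤ |s - t| * ε :=
            mul_le_mul_of_nonneg_left (hVadjH i j hi hj) (abs_nonneg _)
        _ = ε * |s - t| := mul_comm _ _
  have hvedgeLip : ∀ i j, i ≤ n → j < n → ∀ s ∈ Set.Icc (0:ℝ) 1, ∀ t ∈ Set.Icc (0:ℝ) 1,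
      dist (vedge i j s) (vedge i j t) ≤ ε * |s - t| := by
    intro i j hi hj s hs t ht
    simp only [hvedgedef]
    split_ifs with hb
    · have hbi : |av i| = 1 := by
        rcases hb with rfl | rfl
        · rw [hav0]; norm_num
        · rw [havn]; norm_num
      refine le_trans (hγd _ _ (hnn_mk' _ _ hbi (havI j hj s hs))
        (hnn_mk' _ _ hbi (havI j hj t ht))) ?_
      rw [habs_mk_im, show av j + s * hh - (av j + t * hh) = (s - t) * hh by ring,
        abs_mul, abs_of_pos hhpos]
      calc 14 * L₀ * (|s - t| * hh) = (14 * L₀ * hh) * |s - t| := by ring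
        _ ≤ ε * |s - t| := mul_le_mul_of_nonneg_right hL₀h (abs_nonneg _)
    · have hd := hgeod (V i j) (V i (j+1)) (lt_of_le_of_lt (hVadjV i j hi hj) hεD)
      rw [hd.2.2 s hs t ht]
      calc |s - t| * dist (V i j) (V i (j+1)) ≤ |s - t| * ε :=
            mul_le_mul_of_nonneg_left (hVadjV i j hi hj) (abs_nonneg _)
        _ = ε * |s - t| := mul_comm _ _
  -- cells
  set ρ : ℝ := 1 / n with hρdef
  have hρpos : 0 < ρ := by positivity
  have hhρ : hh = 2 * ρ := by rw [hhdef, hρdef]; ring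
  have hρn : ρ * n = 1 := by rw [hρdef]; field_simp
  set cen : ℕ → ℕ → ℂ := fun i j => Complex.mk (av i + ρ) (av j + ρ) with hcendef
  set Bc : ℕ → ℕ → ℂ → X := fun i j p =>
    sqB (vedge i j) (vedge (i+1) j) (hedge i j) (hedge i (j+1))
      ((p.re - av i)/hh, (p.im - av j)/hh) with hBcdef
  set τ : ℕ → ℕ → ℂ → X := fun i j w => Bc i j (cen i j + ((ρ:ℝ):ℂ) * sqmap w) with hτdef
  have hcoord1 : ∀ i j (w : ℂ),
      ((cen i j + ((ρ:ℝ):ℂ) * sqmap w).re - av i)/hh = (1 + (sqmap w).re)/2 := by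
    intro i j w
    rw [Complex.add_re, Complex.re_ofReal_mul,
      show (cen i j).re = av i + ρ from rfl, hhρ]
    field_simp
    ring
  have hcoord2 : ∀ i j (w : ℂ),
      ((cen i j + ((ρ:ℝ):ℂ) * sqmap w).im - av j)/hh = (1 + (sqmap w).im)/2 := by
    intro i j w
    rw [Complex.add_im, Complex.im_ofReal_mul,
      show (cen i j).im = av j + ρ from rfl, hhρ]
    field_simp
    ring
  have hbdw : ∀ w : ℂ, Complex.abs w = 1 →
      bdS ((1 + (sqmap w).re)/2, (1 + (sqmap w).im)/2) := by
    intro w hw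
    have hnnw : nn (sqmap w) = 1 := by rw [nn_sqmap, hw]
    have h1 : |(sqmap w).re| ≤ 1 := le_trans (abs_re_le_nn _) hnnw.le
    have h2 : |(sqmap w).im| ≤ 1 := le_trans (abs_im_le_nn _) hnnw.le
    have h1' := abs_le.mp h1
    have h2' := abs_le.mp h2
    refine ⟨⟨by linarith [h1'.1], by linarith [h1'.2]⟩,
      ⟨by linarith [h2'.1], by linarith [h2'.2]⟩, ?_⟩
    rw [nn_eq_max] at hnnw
    rcases max_choice |(sqmap w).re| |(sqmap w).im| with hm | hm
    · have : |(sqmap w).re| = 1 := by rw [← hm]; exact hnnw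
      rcases abs_eq (by norm_num : (0:ℝ) ≤ 1) |>.mp this with h | h
      · right; left; rw [h]; norm_num
      · left; rw [h]; norm_num
    · have : |(sqmap w).im| = 1 := by rw [← hm]; exact hnnw
      rcases abs_eq (by norm_num : (0:ℝ) ≤ 1) |>.mp this with h | h
      · right; right; right; rw [h]; norm_num
      · right; right; left; rw [h]; norm_num
  -- Lipschitz bound for the cell boundary loops
  have hτlip : ∀ i j, i < n → j < n → ∀ w ∈ sphere (0:ℂ) 1, ∀ w' ∈ sphere (0:ℂ) 1,
      dist (τ i j w) (τ i j w') ≤ (21 * ε) * dist w w' := by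
    intro i j hi hj w hw w' hw'
    have hwa : Complex.abs w = 1 := (sphmem w).mp hw
    have hwa' : Complex.abs w' = 1 := (sphmem w').mp hw'
    have c1 : hedge i j 0 = vedge i j 0 := by
      rw [hedge0 i j hi (le_of_lt hj), hvedge0 i j (le_of_lt hi) hj]
    have c2 : hedge i j 1 = vedge (i+1) j 0 := by
      rw [hedge1 i j hi (le_of_lt hj), hvedge0 (i+1) j hi hj]
    have c3 : hedge i (j+1) 0 = vedge i j 1 := by
      rw [hedge0 i (j+1) hi hj, hvedge1 i j (le_of_lt hi) hj]
    have c4 : hedge i (j+1) 1 = vedge (i+1) j 1 := by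
      rw [hedge1 i (j+1) hi hj, hvedge1 (i+1) j hi hj]
    have key := sqB_lip (vedge i j) (vedge (i+1) j) (hedge i j) (hedge i (j+1)) ε
      (hvedgeLip i j (le_of_lt hi) hj) (hvedgeLip (i+1) j hi hj)
      (hedgeLip i j hi (le_of_lt hj)) (hedgeLip i (j+1) hi hj)
      hε.le c1 c2 c3 c4
      (((cen i j + ((ρ:ℝ):ℂ) * sqmap w).re - av i)/hh,
        ((cen i j + ((ρ:ℝ):ℂ) * sqmap w).im - av j)/hh)
      (((cen i j + ((ρ:ℝ):ℂ) * sqmap w').re - av i)/hh,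
        ((cen i j + ((ρ:ℝ):ℂ) * sqmap w').im - av j)/hh)
      (by rw [hcoord1, hcoord2]; exact hbdw w hwa)
      (by rw [hcoord1, hcoord2]; exact hbdw w' hwa')
    refine le_trans key ?_
    rw [hcoord1, hcoord2, hcoord1, hcoord2]
    have e1 : (1 + (sqmap w).re)/2 - (1 + (sqmap w').re)/2
        = (sqmap w - sqmap w').re / 2 := by
      rw [Complex.sub_re]; ring
    have e2 : (1 + (sqmap w).im)/2 - (1 + (sqmap w').im)/2
        = (sqmap w - sqmap w').im / 2 := by
      rw [Complex.sub_im]; ring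
    rw [e1, e2]
    have hb1 : |(sqmap w - sqmap w').re / 2| ≤ 7 * Complex.abs (w - w') := by
      rw [abs_div]
      have := le_trans (Complex.abs_re_le_abs (sqmap w - sqmap w')) (sqmap_lip w w')
      rw [show |(2:ℝ)| = 2 by norm_num]
      linarith [abs_abs ((sqmap w - sqmap w').re)]
    have hb2 : |(sqmap w - sqmap w').im / 2| ≤ 7 * Complex.abs (w - w') := by
      rw [abs_div]
      have := le_trans (Complex.abs_im_le_abs (sqmap w - sqmap w')) (sqmap_lip w w')
      rw [show |(2:ℝ)| = 2 by norm_num]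
      linarith [abs_abs ((sqmap w - sqmap w').im)]
    have hmax : max |(sqmap w - sqmap w').re / 2| |(sqmap w - sqmap w').im / 2|
        ≤ 7 * Complex.abs (w - w') := max_le hb1 hb2
    rw [Complex.dist_eq]
    calc 3 * ε * max |(sqmap w - sqmap w').re / 2| |(sqmap w - sqmap w').im / 2|
        ≤ 3 * ε * (7 * Complex.abs (w - w')) := by
          exact mul_le_mul_of_nonneg_left hmax (by positivity)
      _ = 21 * ε * Complex.abs (w - w') := by ring
  -- fill each cell using the small-scale hypothesis
  have h21 : 0 < 21 * ε := by positivity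
  have h21D : 21 * ε < D := by rw [hεdef]; linarith
  have hfillEx : ∀ i j : ℕ, ∃ f : ℂ → X, i < n → j < n →
      ((∀ w ∈ sphere (0:ℂ) 1, f w = τ i j w) ∧
        ∀ x ∈ closedBall (0:ℂ) 1, ∀ y ∈ closedBall (0:ℂ) 1,
          dist (f x) (f y) ≤ C * (21 * ε) * dist x y) := by
    intro i j
    by_cases hij : i < n ∧ j < n
    · obtain ⟨f, h1, h2⟩ := hsmall (21*ε) (τ i j) h21 h21D (hτlip i j hij.1 hij.2)
      exact ⟨f, fun _ _ => ⟨h1, h2⟩⟩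
    · exact ⟨fun _ => V 0 0, fun h1 h2 => absurd ⟨h1, h2⟩ hij⟩
  choose fill hfill using hfillEx
  set G : ℕ → ℕ → ℂ → X := fun i j p => fill i j (dmap (((n:ℝ):ℂ) * (p - cen i j))) with hGdef
  -- G agrees with the skeleton on cell boundaries
  have hG1 : ∀ i j, i < n → j < n → ∀ p : ℂ,
      bdS ((p.re - av i)/hh, (p.im - av j)/hh) → G i j p = Bc i j p := by
    intro i j hi hj p hbd
    obtain ⟨hx, hy, hor⟩ := hbd
    have hxra : 0 ≤ p.re - av i := by
      have h' : 0 ≤ (p.re - av i)/hh * hh := mul_nonneg hx.1 hhpos.le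
      rw [div_mul_cancel₀ _ hhpos.ne'] at h'
      exact h'
    have hxrb : p.re - av i ≤ hh := by
      have := hx.2
      rw [div_le_one hhpos] at this
      linarith
    have hyra : 0 ≤ p.im - av j := by
      have h' : 0 ≤ (p.im - av j)/hh * hh := mul_nonneg hy.1 hhpos.le
      rw [div_mul_cancel₀ _ hhpos.ne'] at h'
      exact h'
    have hyrb : p.im - av j ≤ hh := by
      have := hy.2
      rw [div_le_one hhpos] at this
      linarith
    have hre : (p - cen i j).re = p.re - av i - ρ := by
      rw [Complex.sub_re, show (cen i j).re = av i + ρ from rfl]; ring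
    have him : (p - cen i j).im = p.im - av j - ρ := by
      rw [Complex.sub_im, show (cen i j).im = av j + ρ from rfl]; ring
    have hc1 : |(p - cen i j).re| ≤ ρ := by
      rw [hre, abs_le]; rw [hhρ] at hxrb; constructor <;> linarith
    have hc2 : |(p - cen i j).im| ≤ ρ := by
      rw [him, abs_le]; rw [hhρ] at hyrb; constructor <;> linarith
    have hnnc : nn (p - cen i j) = ρ := by
      have hub : nn (p - cen i j) ≤ ρ := max_le hc1 hc2
      refine le_antisymm hub ?_
      rcases hor with h | h | h | h
      · have : p.re - av i = 0 := by
          field_simp at h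
          linarith [h]
        have : |(p - cen i j).re| = ρ := by rw [hre, this]; simp [abs_of_pos hρpos]
        rw [← this]; exact le_max_left _ _
      · have : p.re - av i = hh := by
          rw [div_eq_one_iff_eq hhpos.ne'] at h; exact h
        have : |(p - cen i j).re| = ρ := by
          rw [hre, this, hhρ]
          rw [show 2 * ρ - ρ = ρ by ring, abs_of_pos hρpos]
        rw [← this]; exact le_max_left _ _
      · have : p.im - av j = 0 := by
          field_simp at h
          linarith [h]
        have : |(p - cen i j).im| = ρ := by rw [him, this]; simp [abs_of_pos hρpos]
        rw [← this]; exact le_max_right _ _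
      · have : p.im - av j = hh := by
          rw [div_eq_one_iff_eq hhpos.ne'] at h; exact h
        have : |(p - cen i j).im| = ρ := by
          rw [him, this, hhρ]
          rw [show 2 * ρ - ρ = ρ by ring, abs_of_pos hρpos]
        rw [← this]; exact le_max_right _ _
    have hnnw : nn (((n:ℝ):ℂ) * (p - cen i j)) = 1 := by
      rw [nn_real_mul, hnnc, abs_of_pos hnposR, mul_comm, hρn]
    have hsphw : dmap (((n:ℝ):ℂ) * (p - cen i j)) ∈ sphere (0:ℂ) 1 := hsph _ hnnw
    have := (hfill i j hi hj).1 _ hsphw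
    rw [hGdef]
    simp only []
    rw [this, hτdef]
    simp only []
    rw [sqmap_dmap]
    congr 1
    rw [← mul_assoc, ← Complex.ofReal_mul, hρn]
    simp
  -- G is Lipschitz on each cell
  have hG2 : ∀ i j, i < n → j < n → ∀ p q : ℂ,
      nn (p - cen i j) ≤ ρ → nn (q - cen i j) ≤ ρ →
      dist (G i j p) (G i j q) ≤ (C * (21 * ε) * (14 * n)) * dist p q := by
    intro i j hi hj p q hp hq
    have hmem : ∀ r : ℂ, nn (r - cen i j) ≤ ρ →
        dmap (((n:ℝ):ℂ) * (r - cen i j)) ∈ closedBall (0:ℂ) 1 := by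
      intro r hr
      rw [ballmem, abs_dmap, nn_real_mul, abs_of_pos hnposR]
      calc (n:ℝ) * nn (r - cen i j) ≤ (n:ℝ) * ρ := by
            exact mul_le_mul_of_nonneg_left hr hnposR.le
        _ = 1 := by rw [mul_comm]; exact hρn
    refine le_trans ((hfill i j hi hj).2 _ (hmem p hp) _ (hmem q hq)) ?_
    have hd : dist (dmap (((n:ℝ):ℂ) * (p - cen i j))) (dmap (((n:ℝ):ℂ) * (q - cen i j)))
        ≤ 14 * ((n:ℝ) * dist p q) := by
      refine le_trans (hdlip _ _) ?_
      rw [Complex.dist_eq, Complex.dist_eq]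
      rw [show ((n:ℝ):ℂ) * (p - cen i j) - ((n:ℝ):ℂ) * (q - cen i j) = ((n:ℝ):ℂ) * (p - q) by ring]
      rw [norm_mul, show ‖((n:ℝ):ℂ)‖ = (n:ℝ) from by simp]
    calc C * (21 * ε) * dist (dmap (((n:ℝ):ℂ) * (p - cen i j))) (dmap (((n:ℝ):ℂ) * (q - cen i j)))
        ≤ C * (21 * ε) * (14 * ((n:ℝ) * dist p q)) := by
          refine mul_le_mul_of_nonneg_left hd ?_
          positivity
      _ = (C * (21 * ε) * (14 * n)) * dist p q := by ring
  -- canonical cell indices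
  have hn0 : 0 < n := hn1
  set Iidx : ℝ → ℕ := fun x => min (n-1) ⌊(x+1) * n / 2⌋₊ with hIdef
  have htx : ∀ x : ℝ, -1 ≤ x → 0 ≤ (x+1) * n / 2 :=
    fun x hx => div_nonneg (mul_nonneg (by linarith) hnposR.le) (by norm_num)
  have havt : ∀ x : ℝ, -1 + 2 * ((x+1)*n/2) / n = x := by
    intro x; field_simp; ring
  have hI1 : ∀ x ∈ Set.Icc (-1:ℝ) 1, Iidx x < n ∧ av (Iidx x) ≤ x ∧ x ≤ av (Iidx x + 1) := by
    intro x hx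
    have ht0 := htx x hx.1
    refine ⟨lt_of_le_of_lt (min_le_left _ _) (Nat.sub_lt hn0 one_pos), ?_, ?_⟩
    · have hle : (Iidx x : ℝ) ≤ (x+1)*n/2 := by
        refine le_trans ?_ (Nat.floor_le ht0)
        exact_mod_cast min_le_right (n-1) _
      have h3 : 2 * (Iidx x:ℝ)/n ≤ 2 * ((x+1)*n/2)/n := by gcongr
      have h4 := havt x
      simp only [havdef]
      linarith
    · rcases le_or_gt (n-1) ⌊(x+1) * n / 2⌋₊ with hc | hc
      · have : Iidx x = n - 1 := min_eq_left hc
        rw [this, show n - 1 + 1 = n by omega, havn]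
        exact hx.2
      · have hIeq : Iidx x = ⌊(x+1) * n / 2⌋₊ := min_eq_right hc.le
        rw [hIeq]
        have h5 : (x+1)*n/2 < (⌊(x+1) * n / 2⌋₊ : ℝ) + 1 := Nat.lt_floor_add_one _
        have h6 : 2 * ((x+1)*n/2)/n ≤ 2 * ((⌊(x+1) * n / 2⌋₊:ℝ)+1)/n := by gcongr
        have h4 := havt x
        simp only [havdef]
        push_cast
        linarith
  have hIcell : ∀ i, i < n → ∀ x ∈ Set.Icc (av i) (av (i+1)),
      Iidx x = i ∨ (Iidx x = i + 1 ∧ x = av (i+1) ∧ i + 1 < n) := by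
    intro i hi x hx
    have hxm : -1 ≤ x := le_trans (havmem i (le_of_lt hi)).1 hx.1
    have ht0 := htx x hxm
    have h4 := havt x
    have hit : (i:ℝ) ≤ (x+1)*n/2 := by
      have h1 : av i ≤ x := hx.1
      simp only [havdef] at h1
      have h2 : 2 * (i:ℝ)/n ≤ x + 1 := by linarith
      have h3 : 2 * (i:ℝ) ≤ (x+1) * n := by
        rw [div_le_iff₀ hnposR] at h2; linarith
      rw [le_div_iff₀ (by norm_num : (0:ℝ) < 2)]
      linarith
    have hti : (x+1)*n/2 ≤ (i:ℝ) + 1 := by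
      have h1 : x ≤ av (i+1) := hx.2
      simp only [havdef] at h1
      push_cast at h1
      have h2 : x + 1 ≤ 2 * ((i:ℝ)+1)/n := by linarith
      have h3 : (x+1) * n ≤ 2 * ((i:ℝ)+1) := by
        rw [le_div_iff₀ hnposR] at h2; linarith
      rw [div_le_iff₀ (by norm_num : (0:ℝ) < 2)]
      linarith
    rcases lt_or_eq_of_le hti with hlt | heq
    · left
      have hfl : ⌊(x+1) * n / 2⌋₊ = i := by
        rw [Nat.floor_eq_iff ht0]
        exact ⟨hit, by push_cast; linarith⟩
      rw [hIdef]
      simp only [hfl]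
      exact min_eq_right (Nat.le_pred_of_lt hi)
    · have hxe : x = av (i+1) := by
        rw [heq] at h4
        simp only [havdef]
        push_cast
        linarith
      have hfl : ⌊(x+1) * n / 2⌋₊ = i + 1 := by
        rw [show (x+1) * n / 2 = ((i+1 : ℕ):ℝ) by push_cast; linarith]
        exact Nat.floor_natCast _
      rcases le_or_gt (i+1) (n-1) with hc | hc
      · right
        refine ⟨?_, hxe, ?_⟩
        · rw [hIdef]; simp only [hfl]; exact min_eq_right hc
        · omega
      · left
        have hieq : i + 1 = n := by omega
        rw [hIdef]
        simp only [hfl]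
        have : n - 1 = i := by omega
        rw [this]
        exact min_eq_left (by omega)
  -- adjacency across vertical cell borders
  have hadjH : ∀ i j, i + 1 < n → j < n → ∀ c ∈ Set.Icc (av j) (av (j+1)),
      G (i+1) j (Complex.mk (av (i+1)) c) = G i j (Complex.mk (av (i+1)) c) := by
    intro i j hi1 hj c hc
    have hi : i < n := by omega
    have hv0 : 0 ≤ (c - av j)/hh := by
      apply div_nonneg _ hhpos.le
      linarith [hc.1]
    have hv1 : (c - av j)/hh ≤ 1 := by
      rw [div_le_one hhpos]
      have := hc.2
      rw [havsucc j] at this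
      linarith
    have e1 : (av (i+1) - av i)/hh = 1 := by
      rw [havsucc i, show av i + hh - av i = hh by ring, div_self hhpos.ne']
    have e0 : (av (i+1) - av (i+1))/hh = 0 := by
      rw [sub_self, zero_div]
    have hre : (Complex.mk (av (i+1)) c).re = av (i+1) := rfl
    have him : (Complex.mk (av (i+1)) c).im = c := rfl
    have hbd1 : bdS (((Complex.mk (av (i+1)) c).re - av i)/hh,
        ((Complex.mk (av (i+1)) c).im - av j)/hh) := by
      rw [hre, him, e1]
      exact ⟨⟨zero_le_one, le_refl 1⟩, ⟨hv0, hv1⟩, Or.inr (Or.inl rfl)⟩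
    have hbd2 : bdS (((Complex.mk (av (i+1)) c).re - av (i+1))/hh,
        ((Complex.mk (av (i+1)) c).im - av j)/hh) := by
      rw [hre, him, e0]
      exact ⟨⟨le_refl 0, zero_le_one⟩, ⟨hv0, hv1⟩, Or.inl rfl⟩
    rw [hG1 (i+1) j hi1 hj _ hbd2, hG1 i j hi hj _ hbd1]
    rw [hBcdef]
    simp only [hre, him, e1, e0]
    rw [sqB_eval_left _ _ _ _ _ _ (le_refl (0:ℝ)),
      sqB_eval_right _ _ _ _ _ _ (show ¬ (1:ℝ) ≤ 0 by norm_num) (le_refl (1:ℝ))]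
  -- adjacency across horizontal cell borders
  have hadjV : ∀ i j, i < n → j + 1 < n → ∀ x ∈ Set.Icc (av i) (av (i+1)),
      G i (j+1) (Complex.mk x (av (j+1))) = G i j (Complex.mk x (av (j+1))) := by
    intro i j hi hj1 x hx
    have hj : j < n := by omega
    have hu0 : 0 ≤ (x - av i)/hh := by
      apply div_nonneg _ hhpos.le
      linarith [hx.1]
    have hu1 : (x - av i)/hh ≤ 1 := by
      rw [div_le_one hhpos]
      have := hx.2
      rw [havsucc i] at this
      linarith
    have e1 : (av (j+1) - av j)/hh = 1 := by
      rw [havsucc j, show av j + hh - av j = hh by ring, div_self hhpos.ne']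
    have e0 : (av (j+1) - av (j+1))/hh = 0 := by
      rw [sub_self, zero_div]
    have hre : (Complex.mk x (av (j+1))).re = x := rfl
    have him : (Complex.mk x (av (j+1))).im = av (j+1) := rfl
    have hbd1 : bdS (((Complex.mk x (av (j+1))).re - av i)/hh,
        ((Complex.mk x (av (j+1))).im - av j)/hh) := by
      rw [hre, him, e1]
      exact ⟨⟨hu0, hu1⟩, ⟨zero_le_one, le_refl 1⟩, Or.inr (Or.inr (Or.inr rfl))⟩
    have hbd2 : bdS (((Complex.mk x (av (j+1))).re - av i)/hh,
        ((Complex.mk x (av (j+1))).im - av (j+1))/hh) := by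
      rw [hre, him, e0]
      exact ⟨⟨hu0, hu1⟩, ⟨le_refl 0, zero_le_one⟩, Or.inr (Or.inr (Or.inl rfl))⟩
    rw [hG1 i (j+1) hi hj1 _ hbd2, hG1 i j hi hj _ hbd1]
    rw [hBcdef]
    simp only [hre, him, e1, e0]
    set u := (x - av i)/hh with hudef
    by_cases hc1 : u ≤ 0
    · rw [sqB_eval_left _ _ _ _ _ _ hc1, sqB_eval_left _ _ _ _ _ _ hc1]
      rw [cl_of_mem ⟨zero_le_one, le_refl 1⟩, cl_of_mem ⟨le_refl 0, zero_le_one⟩]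
      rw [hvedge1 i j (le_of_lt hi) hj, hvedge0 i (j+1) (le_of_lt hi) hj1]
    · by_cases hc2 : 1 ≤ u
      · rw [sqB_eval_right _ _ _ _ _ _ hc1 hc2, sqB_eval_right _ _ _ _ _ _ hc1 hc2]
        rw [cl_of_mem ⟨zero_le_one, le_refl 1⟩, cl_of_mem ⟨le_refl 0, zero_le_one⟩]
        rw [hvedge1 (i+1) j hi hj, hvedge0 (i+1) (j+1) hi hj1]
      · rw [sqB_eval_top _ _ _ _ _ _ hc1 hc2 (show ¬ (1:ℝ) ≤ 0 by norm_num),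
          sqB_eval_bottom _ _ _ _ _ _ hc1 hc2 (le_refl (0:ℝ))]
  -- the global filling of the square
  set F : ℂ → X := fun p => G (Iidx p.re) (Iidx p.im) p with hFdef
  have hcellmem : ∀ i j, ∀ x c : ℝ, av i ≤ x → x ≤ av (i+1) → av j ≤ c → c ≤ av (j+1) →
      nn (Complex.mk x c - cen i j) ≤ ρ := by
    intro i j x c h1 h2 h3 h4
    rw [havsucc, hhρ] at h2 h4
    have e1 : (Complex.mk x c - cen i j).re = x - (av i + ρ) := by
      rw [Complex.sub_re]
    have e2 : (Complex.mk x c - cen i j).im = c - (av j + ρ) := by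
      rw [Complex.sub_im]
    rw [nn_eq_max, e1, e2]
    refine max_le (abs_le.mpr ⟨by linarith, by linarith⟩) (abs_le.mpr ⟨by linarith, by linarith⟩)
  have hevalH : ∀ i, i < n → ∀ x ∈ Set.Icc (av i) (av (i+1)), ∀ c ∈ Set.Icc (-1:ℝ) 1,
      F (Complex.mk x c) = G i (Iidx c) (Complex.mk x c) := by
    intro i hi x hx c hc
    rw [hFdef]
    simp only [show (Complex.mk x c).re = x from rfl, show (Complex.mk x c).im = c from rfl]
    rcases hIcell i hi x hx with h | ⟨h1, h2, h3⟩
    · rw [h]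
    · rw [h1, h2]
      exact hadjH i (Iidx c) h3 (hI1 c hc).1 c ⟨(hI1 c hc).2.1, (hI1 c hc).2.2⟩
  have hevalV : ∀ j, j < n → ∀ c ∈ Set.Icc (av j) (av (j+1)), ∀ x ∈ Set.Icc (-1:ℝ) 1,
      F (Complex.mk x c) = G (Iidx x) j (Complex.mk x c) := by
    intro j hj c hc x hx
    rw [hFdef]
    simp only [show (Complex.mk x c).re = x from rfl, show (Complex.mk x c).im = c from rfl]
    rcases hIcell j hj c hc with h | ⟨h1, h2, h3⟩
    · rw [h]
    · rw [h1, h2]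
      exact hadjV (Iidx x) j (hI1 x hx).1 h3 x ⟨(hI1 x hx).2.1, (hI1 x hx).2.2⟩
  set K₀ : ℝ := C * (21 * ε) * (14 * n) with hK₀def
  have hC0 : (0:ℝ) < C := lt_of_lt_of_le one_pos hC
  have hK₀0 : 0 ≤ K₀ := by rw [hK₀def]; positivity
  have hstripH : ∀ c ∈ Set.Icc (-1:ℝ) 1, ∀ x ∈ Set.Icc (-1:ℝ) 1, ∀ x' ∈ Set.Icc (-1:ℝ) 1,
      dist (F (Complex.mk x c)) (F (Complex.mk x' c)) ≤ K₀ * |x - x'| := by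
    intro c hc
    have key := glue1d (fun x => F (Complex.mk x c)) K₀ n av havmono ?_
    · rw [hav0, havn] at key
      exact key
    · intro i hi x hx y hy
      rw [hevalH i hi x hx c hc, hevalH i hi y hy c hc]
      have hj := (hI1 c hc).1
      have hmem1 := hcellmem i (Iidx c) x c hx.1 hx.2 (hI1 c hc).2.1 (hI1 c hc).2.2
      have hmem2 := hcellmem i (Iidx c) y c hy.1 hy.2 (hI1 c hc).2.1 (hI1 c hc).2.2
      have := hG2 i (Iidx c) hi hj _ _ hmem1 hmem2
      rw [Complex.dist_eq, ← Complex.abs_apply, habs_mk_re] at this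
      exact this.trans_eq (by rw [hK₀def])
  have hstripV : ∀ x ∈ Set.Icc (-1:ℝ) 1, ∀ c ∈ Set.Icc (-1:ℝ) 1, ∀ c' ∈ Set.Icc (-1:ℝ) 1,
      dist (F (Complex.mk x c)) (F (Complex.mk x c')) ≤ K₀ * |c - c'| := by
    intro x hx
    have key := glue1d (fun c => F (Complex.mk x c)) K₀ n av havmono ?_
    · rw [hav0, havn] at key
      exact key
    · intro j hj c hc c' hc'
      rw [hevalV j hj c hc x hx, hevalV j hj c' hc' x hx]
      have hi := (hI1 x hx).1
      have hmem1 := hcellmem (Iidx x) j x c (hI1 x hx).2.1 (hI1 x hx).2.2 hc.1 hc.2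
      have hmem2 := hcellmem (Iidx x) j x c' (hI1 x hx).2.1 (hI1 x hx).2.2 hc'.1 hc'.2
      have := hG2 (Iidx x) j hi hj _ _ hmem1 hmem2
      rw [Complex.dist_eq, ← Complex.abs_apply, habs_mk_im] at this
      exact this.trans_eq (by rw [hK₀def])
  have hFlip : ∀ p q : ℂ, nn p ≤ 1 → nn q ≤ 1 →
      dist (F p) (F q) ≤ (2 * K₀) * dist p q := by
    intro p q hp hq
    have hpre : p.re ∈ Set.Icc (-1:ℝ) 1 := abs_le.mp (le_trans (abs_re_le_nn p) hp)
    have hpim : p.im ∈ Set.Icc (-1:ℝ) 1 := abs_le.mp (le_trans (abs_im_le_nn p) hp)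
    have hqre : q.re ∈ Set.Icc (-1:ℝ) 1 := abs_le.mp (le_trans (abs_re_le_nn q) hq)
    have hqim : q.im ∈ Set.Icc (-1:ℝ) 1 := abs_le.mp (le_trans (abs_im_le_nn q) hq)
    have key1 := hstripH p.im hpim p.re hpre q.re hqre
    have key2 := hstripV q.re hqre p.im hpim q.im hqim
    have ep : Complex.mk p.re p.im = p := rfl
    have eq' : Complex.mk q.re q.im = q := rfl
    rw [ep] at key1
    rw [eq'] at key2
    have hb1 : |p.re - q.re| ≤ dist p q := by
      rw [Complex.dist_eq, ← Complex.sub_re]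
      exact Complex.abs_re_le_abs _
    have hb2 : |p.im - q.im| ≤ dist p q := by
      rw [Complex.dist_eq, ← Complex.sub_im]
      exact Complex.abs_im_le_abs _
    calc dist (F p) (F q) ≤ dist (F p) (F (Complex.mk q.re p.im))
          + dist (F (Complex.mk q.re p.im)) (F q) := dist_triangle _ _ _
      _ ≤ K₀ * |p.re - q.re| + K₀ * |p.im - q.im| := add_le_add key1 key2
      _ ≤ K₀ * dist p q + K₀ * dist p q := add_le_add
          (mul_le_mul_of_nonneg_left hb1 hK₀0) (mul_le_mul_of_nonneg_left hb2 hK₀0)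
      _ = (2 * K₀) * dist p q := by ring
  -- boundary values of F
  have hIone : Iidx 1 = n - 1 := by
    rw [hIdef]
    simp only []
    rw [show ((1:ℝ)+1) * n / 2 = ((n:ℕ):ℝ) by push_cast; ring, Nat.floor_natCast]
    exact min_eq_left (by omega)
  have hInegone : Iidx (-1) = 0 := by
    rw [hIdef]
    simp only []
    rw [show ((-1:ℝ)+1) * n / 2 = (0:ℝ) by ring, Nat.floor_zero]
    exact min_eq_right (Nat.zero_le _)
  have havn1 : av (n-1) + hh = 1 := by
    rw [← havsucc (n-1), show n - 1 + 1 = n by omega, havn]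
  have hFbd : ∀ p : ℂ, nn p = 1 → F p = γ (dmap p) := by
    intro p hp
    have hre1 : |p.re| ≤ 1 := le_trans (abs_re_le_nn p) hp.le
    have him1 : |p.im| ≤ 1 := le_trans (abs_im_le_nn p) hp.le
    have hpre : p.re ∈ Set.Icc (-1:ℝ) 1 := abs_le.mp hre1
    have hpim : p.im ∈ Set.Icc (-1:ℝ) 1 := abs_le.mp him1
    by_cases hre : |p.re| = 1
    · -- left or right edge of the square
      set j := Iidx p.im with hjdef
      have hj := (hI1 p.im hpim).1
      have hv0 : 0 ≤ (p.im - av j)/hh := by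
        apply div_nonneg _ hhpos.le
        linarith [(hI1 p.im hpim).2.1]
      have hv1 : (p.im - av j)/hh ≤ 1 := by
        rw [div_le_one hhpos]
        have := (hI1 p.im hpim).2.2
        rw [havsucc j] at this
        linarith
      have hclv : cl ((p.im - av j)/hh) = (p.im - av j)/hh := cl_of_mem ⟨hv0, hv1⟩
      have hvim : av j + (p.im - av j)/hh * hh = p.im := by
        rw [div_mul_cancel₀ _ hhpos.ne']; ring
      rcases (abs_eq (by norm_num : (0:ℝ) ≤ 1)).mp hre with h1 | h1
      · -- p.re = 1 : right edge
        have e1 : (p.re - av (n-1))/hh = 1 := by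
          rw [h1, show (1:ℝ) - av (n-1) = hh by linarith [havn1], div_self hhpos.ne']
        have hbd : bdS ((p.re - av (n-1))/hh, (p.im - av j)/hh) := by
          rw [e1]
          exact ⟨⟨zero_le_one, le_refl 1⟩, ⟨hv0, hv1⟩, Or.inr (Or.inl rfl)⟩
        rw [hFdef]
        simp only []
        rw [h1, hIone, ← hjdef]
        rw [hG1 (n-1) j (by omega) hj p hbd, hBcdef]
        simp only []
        rw [e1, sqB_eval_right _ _ _ _ _ _ (show ¬ (1:ℝ) ≤ 0 by norm_num) (le_refl 1)]
        rw [show n - 1 + 1 = n by omega]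
        simp only [hvedgedef, eq_self_iff_true, true_or, or_true, if_true]
        rw [hclv]
        congr 1
        congr 1
        apply Complex.ext
        · show av n = p.re
          rw [havn, h1]
        · show av j + (p.im - av j)/hh * hh = p.im
          exact hvim
      · -- p.re = -1 : left edge
        have e0 : (p.re - av 0)/hh = 0 := by
          rw [h1, hav0, sub_self, zero_div]
        have hbd : bdS ((p.re - av 0)/hh, (p.im - av j)/hh) := by
          rw [e0]
          exact ⟨⟨le_refl 0, zero_le_one⟩, ⟨hv0, hv1⟩, Or.inl rfl⟩
        rw [hFdef]
        simp only []
        rw [h1, hInegone, ← hjdef]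
        rw [hG1 0 j hn0 hj p hbd, hBcdef]
        simp only []
        rw [e0, sqB_eval_left _ _ _ _ _ _ (le_refl (0:ℝ))]
        simp only [hvedgedef, eq_self_iff_true, true_or, or_true, if_true]
        rw [hclv]
        congr 1
        congr 1
        apply Complex.ext
        · show av 0 = p.re
          rw [hav0, h1]
        · show av j + (p.im - av j)/hh * hh = p.im
          exact hvim
    · -- top or bottom edge
      have him : |p.im| = 1 := by
        rw [nn_eq_max] at hp
        rcases max_choice |p.re| |p.im| with hm | hm
        · exact absurd (hm ▸ hp) hre
        · exact hm ▸ hp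
      set i := Iidx p.re with hidef
      have hi := (hI1 p.re hpre).1
      have hu0 : 0 ≤ (p.re - av i)/hh := by
        apply div_nonneg _ hhpos.le
        linarith [(hI1 p.re hpre).2.1]
      have hu1 : (p.re - av i)/hh ≤ 1 := by
        rw [div_le_one hhpos]
        have := (hI1 p.re hpre).2.2
        rw [havsucc i] at this
        linarith
      have hclu : cl ((p.re - av i)/hh) = (p.re - av i)/hh := cl_of_mem ⟨hu0, hu1⟩
      have hure : av i + (p.re - av i)/hh * hh = p.re := by
        rw [div_mul_cancel₀ _ hhpos.ne']; ring
      rcases (abs_eq (by norm_num : (0:ℝ) ≤ 1)).mp him with h1 | h1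
      · -- p.im = 1 : top edge
        have e1 : (p.im - av (n-1))/hh = 1 := by
          rw [h1, show (1:ℝ) - av (n-1) = hh by linarith [havn1], div_self hhpos.ne']
        have hbd : bdS ((p.re - av i)/hh, (p.im - av (n-1))/hh) := by
          rw [e1]
          exact ⟨⟨hu0, hu1⟩, ⟨zero_le_one, le_refl 1⟩, Or.inr (Or.inr (Or.inr rfl))⟩
        rw [hFdef]
        simp only []
        rw [h1, hIone, ← hidef]
        rw [hG1 i (n-1) hi (by omega) p hbd, hBcdef]
        simp only []
        rw [e1]
        by_cases hc1 : (p.re - av i)/hh ≤ 0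
        · have hu00 : (p.re - av i)/hh = 0 := le_antisymm hc1 hu0
          have hpav : p.re = av i := by
            have := div_eq_zero_iff.mp hu00
            rcases this with h | h
            · linarith
            · exact absurd h hhpos.ne'
          rw [sqB_eval_left _ _ _ _ _ _ hc1]
          rw [cl_of_mem ⟨zero_le_one, le_refl 1⟩]
          rw [hvedge1 i (n-1) (le_of_lt hi) (by omega), show n - 1 + 1 = n by omega]
          rw [hVdef]
          simp only []
          rw [hgγ _ (hnnz i n (le_of_lt hi) (le_refl n) (by tauto))]
          congr 2
          apply Complex.ext
          · show av i = p.re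
            rw [hpav]
          · show av n = p.im
            rw [havn, h1]
        · by_cases hc2 : 1 ≤ (p.re - av i)/hh
          · have hu11 : (p.re - av i)/hh = 1 := le_antisymm hu1 hc2
            have hpav : p.re = av (i+1) := by
              rw [div_eq_one_iff_eq hhpos.ne'] at hu11
              rw [havsucc]
              linarith
            rw [sqB_eval_right _ _ _ _ _ _ hc1 hc2]
            rw [cl_of_mem ⟨zero_le_one, le_refl 1⟩]
            rw [hvedge1 (i+1) (n-1) hi (by omega), show n - 1 + 1 = n by omega]
            rw [hVdef]
            simp only []
            rw [hgγ _ (hnnz (i+1) n hi (le_refl n) (by tauto))]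
            congr 2
            apply Complex.ext
            · show av (i+1) = p.re
              rw [hpav]
            · show av n = p.im
              rw [havn, h1]
          · rw [sqB_eval_top _ _ _ _ _ _ hc1 hc2 (show ¬ (1:ℝ) ≤ 0 by norm_num)]
            rw [show n - 1 + 1 = n by omega]
            simp only [hhedgedef, eq_self_iff_true, true_or, or_true, if_true]
            rw [hclu]
            congr 1
            congr 1
            apply Complex.ext
            · show av i + (p.re - av i)/hh * hh = p.re
              exact hure
            · show av n = p.im
              rw [havn, h1]
      · -- p.im = -1 : bottom edge
        have e0 : (p.im - av 0)/hh = 0 := by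
          rw [h1, hav0, sub_self, zero_div]
        have hbd : bdS ((p.re - av i)/hh, (p.im - av 0)/hh) := by
          rw [e0]
          exact ⟨⟨hu0, hu1⟩, ⟨le_refl 0, zero_le_one⟩, Or.inr (Or.inr (Or.inl rfl))⟩
        rw [hFdef]
        simp only []
        rw [h1, hInegone, ← hidef]
        rw [hG1 i 0 hi hn0 p hbd, hBcdef]
        simp only []
        rw [e0]
        by_cases hc1 : (p.re - av i)/hh ≤ 0
        · have hu00 : (p.re - av i)/hh = 0 := le_antisymm hc1 hu0
          have hpav : p.re = av i := by
            have := div_eq_zero_iff.mp hu00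
            rcases this with h | h
            · linarith
            · exact absurd h hhpos.ne'
          rw [sqB_eval_left _ _ _ _ _ _ hc1]
          rw [cl_of_mem ⟨le_refl 0, zero_le_one⟩]
          rw [hvedge0 i 0 (le_of_lt hi) hn0]
          rw [hVdef]
          simp only []
          rw [hgγ _ (hnnz i 0 (le_of_lt hi) (Nat.zero_le n) (by tauto))]
          congr 2
          apply Complex.ext
          · show av i = p.re
            rw [hpav]
          · show av 0 = p.im
            rw [hav0, h1]
        · by_cases hc2 : 1 ≤ (p.re - av i)/hh
          · have hu11 : (p.re - av i)/hh = 1 := le_antisymm hu1 hc2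
            have hpav : p.re = av (i+1) := by
              rw [div_eq_one_iff_eq hhpos.ne'] at hu11
              rw [havsucc]
              linarith
            rw [sqB_eval_right _ _ _ _ _ _ hc1 hc2]
            rw [cl_of_mem ⟨le_refl 0, zero_le_one⟩]
            rw [hvedge0 (i+1) 0 hi hn0]
            rw [hVdef]
            simp only []
            rw [hgγ _ (hnnz (i+1) 0 hi (Nat.zero_le n) (by tauto))]
            congr 2
            apply Complex.ext
            · show av (i+1) = p.re
              rw [hpav]
            · show av 0 = p.im
              rw [hav0, h1]
          · rw [sqB_eval_bottom _ _ _ _ _ _ hc1 hc2 (le_refl (0:ℝ))]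
            simp only [hhedgedef, eq_self_iff_true, true_or, or_true, if_true]
            rw [hclu]
            congr 1
            congr 1
            apply Complex.ext
            · show av i + (p.re - av i)/hh * hh = p.re
              exact hure
            · show av 0 = p.im
              rw [hav0, h1]
  -- conclusion
  refine ⟨2 * K₀ * 14, fun w => F (sqmap w), ?_, ?_⟩
  · intro x hx
    have h1 : nn (sqmap x) = 1 := by rw [nn_sqmap, (sphmem x).mp hx]
    show F (sqmap x) = γ x
    rw [hFbd _ h1, dmap_sqmap]
  · intro x hx y hy
    have h1 : nn (sqmap x) ≤ 1 := by rw [nn_sqmap]; exact (ballmem x).mp hx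
    have h2 : nn (sqmap y) ≤ 1 := by rw [nn_sqmap]; exact (ballmem y).mp hy
    calc dist (F (sqmap x)) (F (sqmap y)) ≤ (2 * K₀) * dist (sqmap x) (sqmap y) :=
          hFlip _ _ h1 h2
      _ ≤ (2 * K₀) * (14 * dist x y) := by
          refine mul_le_mul_of_nonneg_left ?_ (by linarith)
          rw [Complex.dist_eq, Complex.dist_eq]
          exact sqmap_lip x y
      _ = 2 * K₀ * 14 * dist x y := by ring
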